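/- Measure of the non-contact set, first estimate: let Ω ⊂ ℝ^d be a bounded open convex set and 𝒩 = 𝒩ᴵ ∪ 𝒩ᴮ a nodal set with 𝒩ᴵ ⊂ Ω, 𝒩ᴮ ⊂ ∂Ω, and every interior node in the topological interior of conv(𝒩). Let u_h and v_h be convex nodal functions with u_h = v_h on 𝒩ᴮ and u_h ≤ v_h on 𝒩ᴵ, and set f_i := vol(∂u_h(x_i)) and g_i := vol(∂v_h(x_i)) for x_i ∈ 𝒩ᴵ. Fix 0 < ε < 1, put τ := ε/(1−ε), let 𝒞_ε be the contact set of w_ε := u_h − (1−ε)v_h and S_ε := 𝒩ᴵ \ 𝒞_ε. For S ⊆ 𝒩ᴵ define μ(S) := Σ_{x_i∈S} f_i and ν_τ(S) := Σ_{x_i∈S} (f_i^{1/d} + τ^{−1} |g_i^{1/d} − f_i^{1/d}|)^d. Then μ(S_ε) ≤ ν_τ(𝒞_ε) − μ(𝒞_ε). -/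

import Mathlib

open scoped BigOperators RealInnerProductSpace
open MeasureTheory
open scoped Classical

noncomputable section

/-- `ℝ^d` with the Euclidean inner product. -/
abbrev Euc (d : ℕ) := EuclideanSpace ℝ (Fin d)

/-- Subdifferential of a nodal function `u` at a node `z`, relative to the nodal set `N`. -/
def nodalSubdiff {d : ℕ} (N : Finset (Euc d)) (u : Euc d → ℝ) (z : Euc d) : Set (Euc d) :=
  {p | ∀ y ∈ N, u z + ⟪p, y - z⟫ ≤ u y}

/-- A nodal function is convex if its subdifferential is nonempty at every interior node. -/
def IsConvexNodal {d : ℕ} (NI N : Finset (Euc d)) (u : Euc d → ℝ) : Prop :=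
  ∀ z ∈ NI, (nodalSubdiff N u z).Nonempty

/-- The convex envelope of a nodal function: the sup of affine functions lying below `u`
on the nodal set `N`. -/
def convEnv {d : ℕ} (N : Finset (Euc d)) (u : Euc d → ℝ) (x : Euc d) : ℝ :=
  sSup {t : ℝ | ∃ (q : Euc d) (c : ℝ), (∀ y ∈ N, ⟪q, y⟫ + c ≤ u y) ∧ t = ⟪q, x⟫ + c}

/-- Subdifferential of the convex envelope of a nodal function at a node `z`
(supporting slopes over the convex hull of the nodal set). -/
def envSubdiff {d : ℕ} (N : Finset (Euc d)) (u : Euc d → ℝ) (z : Euc d) : Set (Euc d) :=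
  {p | ∀ x ∈ convexHull ℝ (N : Set (Euc d)),
    convEnv N u z + ⟪p, x - z⟫ ≤ convEnv N u x}

/-- The vector in `ℝ^d` associated with an integer vector `e ∈ ℤ^d`. -/
def intVec {d : ℕ} (e : Fin d → ℤ) : Euc d := WithLp.toLp 2 (fun i => (e i : ℝ))

/-- Second-order difference of a nodal function `w` at `z` in direction `e ∈ ℤ^d`,
with nodal spacing `h`. -/
def delta2 {d : ℕ} (h : ℝ) (e : Fin d → ℤ) (w : Euc d → ℝ) (z : Euc d) : ℝ :=
  (w (z + h • intVec e) - 2 * w z + w (z - h • intVec e)) / (‖intVec e‖ ^ 2 * h ^ 2)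

open Set
open scoped ENNReal NNReal Pointwise


/-- 1-D sumset inequality for compact sets. -/
lemma vol1_compact_add (K L : Set ℝ) (hK : IsCompact K) (hL : IsCompact L)
    (hKne : K.Nonempty) (hLne : L.Nonempty) :
    volume K + volume L ≤ volume (K + L) := by
  set a := sSup K with ha
  set b := sInf L with hb
  have haK : a ∈ K := hK.sSup_mem hKne
  have hbL : b ∈ L := hL.sInf_mem hLne
  set A : Set ℝ := (· + b) '' K with hA
  set B : Set ℝ := (a + ·) '' L with hB
  have hAK : A ⊆ K + L := by
    rintro x ⟨k, hk, rfl⟩; exact add_mem_add hk hbL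
  have hBL : B ⊆ K + L := by
    rintro x ⟨l, hl, rfl⟩; exact add_mem_add haK hl
  have hAc : IsCompact A := hK.image (continuous_add_right b)
  have hBc : IsCompact B := hL.image (continuous_add_left a)
  have hdisj : Disjoint (A \ {a + b}) B := by
    rw [Set.disjoint_left]
    rintro x ⟨⟨k, hk, rfl⟩, hne⟩ ⟨l, hl, heq⟩
    simp only at heq
    have h1 : k + b ≤ a + b := add_le_add_left (le_csSup hK.bddAbove hk) b
    have h2 : a + b ≤ a + l := add_le_add_right (csInf_le hL.bddBelow hl) a
    have : k + b = a + b := le_antisymm h1 (heq ▸ h2)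
    exact hne (by simp [this])
  have hsub : (A \ {a + b}) ∪ B ⊆ K + L := union_subset (diff_subset.trans hAK) hBL
  have hmeas : volume ((A \ {a + b}) ∪ B) = volume (A \ {a + b}) + volume B := by
    exact measure_union hdisj hBc.measurableSet
  have hAd : volume (A \ {a + b}) = volume A := by
    apply measure_diff_null
    simp [measure_singleton]
  have hvA : volume A = volume K := by
    rw [show A = (· + -b) ⁻¹' K by ext x; simp [hA, neg_add_eq_sub, sub_eq_iff_eq_add]]
    exact measure_preimage_add_right volume (-b) K
  have hvB : volume B = volume L := by
    rw [show B = (-a + ·) ⁻¹' L by ext x; simp [hB, neg_add_eq_iff_eq_add, eq_comm]]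
    exact measure_preimage_add volume (-a) L
  calc volume K + volume L = volume ((A \ {a + b}) ∪ B) := by rw [hmeas, hAd, hvA, hvB]
    _ ≤ volume (K + L) := measure_mono hsub

/-- 1-D sumset inequality: if `S + T ⊆ U` with `S, T` nonempty measurable and `U` measurable,
then `vol S + vol T ≤ vol U`. -/
lemma vol1_meas_add {S T U : Set ℝ} (hS : MeasurableSet S) (hT : MeasurableSet T)
    (hU : MeasurableSet U) (hSne : S.Nonempty) (hTne : T.Nonempty) (hsub : S + T ⊆ U) :
    volume S + volume T ≤ volume U := by
  obtain ⟨s₀, hs₀⟩ := hSne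
  obtain ⟨t₀, ht₀⟩ := hTne
  rcases eq_or_ne (volume U) ⊤ with hUtop | hUtop
  · simp [hUtop]
  have hSfin : volume S ≠ ⊤ := by
    intro h
    have : volume ((· + t₀) '' S) ≤ volume U := by
      apply measure_mono; rintro x ⟨s, hs, rfl⟩; exact hsub (add_mem_add hs ht₀)
    rw [show (· + t₀) '' S = (· + -t₀) ⁻¹' S by
        ext x; simp [neg_add_eq_sub, sub_eq_iff_eq_add],
      measure_preimage_add_right volume (-t₀) S, h] at this
    exact hUtop (top_le_iff.mp this)
  have hTfin : volume T ≠ ⊤ := by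
    intro h
    have : volume ((s₀ + ·) '' T) ≤ volume U := by
      apply measure_mono; rintro x ⟨t, ht, rfl⟩; exact hsub (add_mem_add hs₀ ht)
    rw [show (s₀ + ·) '' T = (-s₀ + ·) ⁻¹' T by
        ext x; simp [neg_add_eq_iff_eq_add, eq_comm],
      measure_preimage_add volume (-s₀) T, h] at this
    exact hUtop (top_le_iff.mp this)
  refine ENNReal.le_of_forall_pos_le_add fun δ hδ _ => ?_
  have hδ2 : ((δ : ℝ≥0∞) / 2) ≠ 0 := by
    simp [ENNReal.div_eq_zero_iff, hδ.ne']
  obtain ⟨K, hKS, hKc, hKv⟩ := hS.exists_isCompact_lt_add hSfin hδ2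
  obtain ⟨L, hLT, hLc, hLv⟩ := hT.exists_isCompact_lt_add hTfin hδ2
  set K' := K ∪ {s₀} with hK'
  set L' := L ∪ {t₀} with hL'
  have hK'c : IsCompact K' := hKc.union isCompact_singleton
  have hL'c : IsCompact L' := hLc.union isCompact_singleton
  have hK'S : K' ⊆ S := union_subset hKS (by simpa using hs₀)
  have hL'T : L' ⊆ T := union_subset hLT (by simpa using ht₀)
  have key := vol1_compact_add K' L' hK'c hL'c (by simp [hK']) (by simp [hL'])
  have h1 : volume (K' + L') ≤ volume U :=
    measure_mono ((Set.add_subset_add hK'S hL'T).trans hsub)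
  have h2 : volume S ≤ volume K' + δ / 2 :=
    le_trans hKv.le (add_le_add_left (measure_mono subset_union_left) _)
  have h3 : volume T ≤ volume L' + δ / 2 :=
    le_trans hLv.le (add_le_add_left (measure_mono subset_union_left) _)
  calc volume S + volume T ≤ (volume K' + δ / 2) + (volume L' + δ / 2) := add_le_add h2 h3
    _ = (volume K' + volume L') + (δ / 2 + δ / 2) := by ring
    _ ≤ volume U + δ := by
        rw [ENNReal.add_halves]
        exact add_le_add_left (key.trans h1) _

/-- One-dimensional Prékopa–Leindler inequality (for bounded integrable data). -/
lemma prekopa_leindler_dim1 {t : ℝ} (ht0 : 0 < t) (ht1 : t < 1)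
    (f g h : ℝ → ℝ≥0∞) (hf : Measurable f) (hg : Measurable g) (hh : Measurable h)
    (hfi : ∫⁻ x, f x ≠ ⊤) (hgi : ∫⁻ x, g x ≠ ⊤)
    (hfM : (⨆ x, f x) ≠ ⊤) (hgM : (⨆ x, g x) ≠ ⊤)
    (key : ∀ x y, f x ^ (1 - t) * g y ^ t ≤ h ((1 - t) * x + t * y)) :
    (∫⁻ x, f x) ^ (1 - t) * (∫⁻ x, g x) ^ t ≤ ∫⁻ x, h x := by
  have ht0' : (0:ℝ) < 1 - t := by linarith
  rcases eq_or_ne (∫⁻ x, f x) 0 with hf0 | hf0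
  · rw [hf0, ENNReal.zero_rpow_of_pos ht0', zero_mul]; exact zero_le
  rcases eq_or_ne (∫⁻ x, g x) 0 with hg0 | hg0
  · rw [hg0, ENNReal.zero_rpow_of_pos ht0, mul_zero]; exact zero_le
  set Mf := ⨆ x, f x with hMf
  set Mg := ⨆ x, g x with hMg
  have hMf0 : Mf ≠ 0 := by
    intro h0
    apply hf0
    have : ∀ x, f x = 0 := fun x => le_antisymm (h0 ▸ le_iSup f x) (zero_le)
    simp [this]
  have hMg0 : Mg ≠ 0 := by
    intro h0
    apply hg0
    have : ∀ x, g x = 0 := fun x => le_antisymm (h0 ▸ le_iSup g x) (zero_le)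
    simp [this]
  set c₀ : ℝ≥0∞ := Mf ^ (1 - t) * Mg ^ t with hc₀
  have hc₀0 : c₀ ≠ 0 := by
    apply mul_ne_zero
    · exact (ENNReal.rpow_pos (lt_of_le_of_ne (zero_le) (Ne.symm hMf0)) hfM).ne'
    · exact (ENNReal.rpow_pos (lt_of_le_of_ne (zero_le) (Ne.symm hMg0)) hgM).ne'
  have hc₀top : c₀ ≠ ⊤ := by
    exact ENNReal.mul_ne_top (ENNReal.rpow_ne_top_of_nonneg ht0'.le hfM)
      (ENNReal.rpow_ne_top_of_nonneg ht0.le hgM)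
  set F : ℝ → ℝ≥0∞ := fun x => f x * Mf⁻¹ with hF
  set G : ℝ → ℝ≥0∞ := fun x => g x * Mg⁻¹ with hG
  set H : ℝ → ℝ≥0∞ := fun z => min (h z * c₀⁻¹) 1 with hH
  have hFm : Measurable F := hf.mul_const _
  have hGm : Measurable G := hg.mul_const _
  have hHm : Measurable H := (hh.mul_const _).min measurable_const
  have hF1 : ∀ x, F x ≤ 1 := fun x => by
    rw [hF]
    calc f x * Mf⁻¹ ≤ Mf * Mf⁻¹ := mul_le_mul_left (le_iSup f x) _
      _ = 1 := ENNReal.mul_inv_cancel hMf0 hfM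
  have hG1 : ∀ x, G x ≤ 1 := fun x => by
    rw [hG]
    calc g x * Mg⁻¹ ≤ Mg * Mg⁻¹ := mul_le_mul_left (le_iSup g x) _
      _ = 1 := ENNReal.mul_inv_cancel hMg0 hgM
  have hFtop : ∀ x, F x ≠ ⊤ := fun x => ((hF1 x).trans_lt ENNReal.one_lt_top).ne
  have hGtop : ∀ x, G x ≠ ⊤ := fun x => ((hG1 x).trans_lt ENNReal.one_lt_top).ne
  have hHtop : ∀ x, H x ≠ ⊤ := fun x =>
    ((min_le_right _ _).trans_lt ENNReal.one_lt_top).ne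
  -- the key pointwise bound for normalized functions
  have key' : ∀ x y, min (F x) (G y) ≤ H ((1 - t) * x + t * y) := by
    intro x y
    set m := min (F x) (G y) with hm
    rcases eq_or_ne m 0 with h0 | h0
    · rw [h0]; exact zero_le
    have hmtop : m ≠ ⊤ := ((min_le_left _ _).trans_lt ((hF1 x).trans_lt ENNReal.one_lt_top)).ne
    have hsplit : m = m ^ (1 - t) * m ^ t := by
      rw [← ENNReal.rpow_add _ _ h0 hmtop]
      norm_num
    have h1 : m ^ (1 - t) ≤ F x ^ (1 - t) :=
      ENNReal.rpow_le_rpow (min_le_left _ _) ht0'.le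
    have h2 : m ^ t ≤ G y ^ t :=
      ENNReal.rpow_le_rpow (min_le_right _ _) ht0.le
    have hFG : F x ^ (1 - t) * G y ^ t = f x ^ (1 - t) * g y ^ t * c₀⁻¹ := by
      rw [hF, hG, ENNReal.mul_rpow_of_ne_top (ne_top_of_le_ne_top hfM (le_iSup f x))
          (ENNReal.inv_ne_top.2 hMf0),
        ENNReal.mul_rpow_of_ne_top (ne_top_of_le_ne_top hgM (le_iSup g y))
          (ENNReal.inv_ne_top.2 hMg0),
        ENNReal.inv_rpow, ENNReal.inv_rpow, mul_mul_mul_comm, hc₀,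
        ← ENNReal.mul_inv (Or.inl (by
            exact (ENNReal.rpow_pos (lt_of_le_of_ne (zero_le) (Ne.symm hMf0)) hfM).ne'))
          (Or.inl (ENNReal.rpow_ne_top_of_nonneg ht0'.le hfM))]
    have : m ≤ h ((1 - t) * x + t * y) * c₀⁻¹ := by
      calc m = m ^ (1 - t) * m ^ t := hsplit
        _ ≤ F x ^ (1 - t) * G y ^ t := mul_le_mul' h1 h2
        _ = f x ^ (1 - t) * g y ^ t * c₀⁻¹ := hFG
        _ ≤ h ((1 - t) * x + t * y) * c₀⁻¹ := mul_le_mul_left (key x y) _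
    refine le_min this ?_
    exact (min_le_left _ _).trans (hF1 x)
  -- layer cake representation
  have layer : ∀ (φ : ℝ → ℝ≥0∞), Measurable φ → (∀ x, φ x ≠ ⊤) →
      ∫⁻ x, φ x = ∫⁻ c in Ioi (0:ℝ), volume {x | ENNReal.ofReal c < φ x} := by
    intro φ hφ hφtop
    have h1 : ∫⁻ x, φ x = ∫⁻ x, ENNReal.ofReal ((φ x).toReal) := by
      congr 1; funext x; rw [ENNReal.ofReal_toReal (hφtop _)]
    rw [h1, lintegral_eq_lintegral_meas_lt volume (ae_of_all _ fun x => ENNReal.toReal_nonneg)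
      hφ.ennreal_toReal.aemeasurable]
    refine setLIntegral_congr_fun measurableSet_Ioi (fun c hc => ?_)
    congr 1; ext x
    simp only [mem_setOf_eq]
    rw [ENNReal.ofReal_lt_iff_lt_toReal (le_of_lt hc) (hφtop x)]
  have tail : ∀ (φ : ℝ → ℝ≥0∞), (∀ x, φ x ≤ 1) → ∀ c : ℝ, 1 ≤ c →
      {x | ENNReal.ofReal c < φ x} = ∅ := by
    intro φ h1 c hc
    refine eq_empty_iff_forall_notMem.2 fun x hx => ?_
    exact absurd (lt_of_lt_of_le hx (h1 x)) (not_lt.2 (ENNReal.one_le_ofReal.2 hc))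
  have restrict01 : ∀ (φ : ℝ → ℝ≥0∞), (∀ x, φ x ≤ 1) →
      ∫⁻ c in Ioi (0:ℝ), volume {x | ENNReal.ofReal c < φ x}
        = ∫⁻ c in Ioo (0:ℝ) 1, volume {x | ENNReal.ofReal c < φ x} := by
    intro φ h1
    rw [← Ioo_union_Ici_eq_Ioi (by norm_num : (0:ℝ) < 1),
      lintegral_union measurableSet_Ici
        (by rw [Set.disjoint_left]; rintro x ⟨_, h1⟩ h2; exact absurd h2 (not_le.2 h1))]
    have : ∫⁻ c in Ici (1:ℝ), volume {x | ENNReal.ofReal c < φ x} = 0 := by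
      rw [setLIntegral_congr_fun measurableSet_Ici
        (show EqOn (fun c => volume {x | ENNReal.ofReal c < φ x}) (fun _ => 0) (Ici (1:ℝ)) from
          fun c hc => by simp only; rw [tail φ h1 c hc, measure_empty]),
        lintegral_zero]
    rw [this, add_zero]
  have hsupF : (⨆ x, F x) = 1 := by
    rw [hF]
    simp only
    rw [← ENNReal.iSup_mul, ← hMf, ENNReal.mul_inv_cancel hMf0 hfM]
  have hsupG : (⨆ x, G x) = 1 := by
    rw [hG]
    simp only
    rw [← ENNReal.iSup_mul, ← hMg, ENNReal.mul_inv_cancel hMg0 hgM]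
  have hneF : ∀ c : ℝ, c < 1 → {x | ENNReal.ofReal c < F x}.Nonempty := by
    intro c hc
    have : ENNReal.ofReal c < ⨆ x, F x := hsupF ▸ ENNReal.ofReal_lt_one.2 hc
    obtain ⟨x, hx⟩ := lt_iSup_iff.mp this
    exact ⟨x, hx⟩
  have hneG : ∀ c : ℝ, c < 1 → {x | ENNReal.ofReal c < G x}.Nonempty := by
    intro c hc
    have : ENNReal.ofReal c < ⨆ x, G x := hsupG ▸ ENNReal.ofReal_lt_one.2 hc
    obtain ⟨x, hx⟩ := lt_iSup_iff.mp this
    exact ⟨x, hx⟩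
  -- the key measure inequality on levels
  have main : ∀ c ∈ Ioo (0:ℝ) 1,
      ENNReal.ofReal (1 - t) * volume {x | ENNReal.ofReal c < F x}
        + ENNReal.ofReal t * volume {x | ENNReal.ofReal c < G x}
        ≤ volume {z | ENNReal.ofReal c < H z} := by
    intro c hc
    set S := {x | ENNReal.ofReal c < F x} with hS
    set T := {x | ENNReal.ofReal c < G x} with hT
    have hSm : MeasurableSet S := measurableSet_lt measurable_const hFm
    have hTm : MeasurableSet T := measurableSet_lt measurable_const hGm
    have hUm : MeasurableSet {z | ENNReal.ofReal c < H z} :=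
      measurableSet_lt measurable_const hHm
    have hsub : (1 - t) • S + t • T ⊆ {z | ENNReal.ofReal c < H z} := by
      rintro z ⟨a, ⟨x, hx, rfl⟩, b, ⟨y, hy, rfl⟩, rfl⟩
      have : ENNReal.ofReal c < min (F x) (G y) := lt_min hx hy
      exact this.trans_le (key' x y)
    have h1 := vol1_meas_add (hSm.const_smul₀ (1 - t)) (hTm.const_smul₀ t) hUm
      ((hneF c hc.2).smul_set) ((hneG c hc.2).smul_set) hsub
    have hvS : volume ((1 - t) • S) = ENNReal.ofReal (1 - t) * volume S := by
      rw [Measure.addHaar_smul]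
      congr 2
      simp [abs_of_pos ht0']
    have hvT : volume (t • T) = ENNReal.ofReal t * volume T := by
      rw [Measure.addHaar_smul]
      congr 2
      simp [abs_of_pos ht0]
    rw [hvS, hvT] at h1
    exact h1
  -- measurability of level-volume functions
  have hmF : Measurable fun c : ℝ => volume {x | ENNReal.ofReal c < F x} := by
    apply Antitone.measurable
    intro c c' hcc
    exact measure_mono fun x hx => lt_of_le_of_lt (ENNReal.ofReal_le_ofReal hcc) hx
  have hmG : Measurable fun c : ℝ => volume {x | ENNReal.ofReal c < G x} := by
    apply Antitone.measurable
    intro c c' hcc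
    exact measure_mono fun x hx => lt_of_le_of_lt (ENNReal.ofReal_le_ofReal hcc) hx
  -- integrals of normalized functions
  set IF := ∫⁻ x, F x with hIFdef
  set IG := ∫⁻ x, G x with hIGdef
  have hIF : IF = (∫⁻ x, f x) * Mf⁻¹ := lintegral_mul_const _ hf
  have hIG : IG = (∫⁻ x, g x) * Mg⁻¹ := lintegral_mul_const _ hg
  have hIFtop : IF ≠ ⊤ := by
    rw [hIF]; exact ENNReal.mul_ne_top hfi (ENNReal.inv_ne_top.2 hMf0)
  have hIGtop : IG ≠ ⊤ := by
    rw [hIG]; exact ENNReal.mul_ne_top hgi (ENNReal.inv_ne_top.2 hMg0)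
  -- the combined integral inequality
  have chain2 : ENNReal.ofReal (1 - t) * IF + ENNReal.ofReal t * IG ≤ ∫⁻ z, H z := by
    rw [hIFdef, hIGdef, layer F hFm hFtop, layer G hGm hGtop, layer H hHm hHtop,
      restrict01 F hF1, restrict01 G hG1]
    have step1 : ∫⁻ c in Ioo (0:ℝ) 1, volume {z | ENNReal.ofReal c < H z}
        ≤ ∫⁻ c in Ioi (0:ℝ), volume {z | ENNReal.ofReal c < H z} :=
      lintegral_mono' (Measure.restrict_mono Ioo_subset_Ioi_self le_rfl) le_rfl
    refine le_trans ?_ step1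
    rw [← lintegral_const_mul _ hmF, ← lintegral_const_mul _ hmG,
      ← lintegral_add_left ((hmF.const_mul _)) ]
    refine lintegral_mono_ae ((ae_restrict_iff' measurableSet_Ioo).2
      (ae_of_all _ fun c hc => ?_))
    exact main c hc
  -- AM-GM step
  have amgm : IF ^ (1 - t) * IG ^ t ≤ ENNReal.ofReal (1 - t) * IF + ENNReal.ofReal t * IG := by
    have hreal := Real.geom_mean_le_arith_mean2_weighted ht0'.le ht0.le
      ENNReal.toReal_nonneg ENNReal.toReal_nonneg (by ring : (1 - t) + t = 1)
      (p₁ := IF.toReal) (p₂ := IG.toReal)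
    calc IF ^ (1 - t) * IG ^ t
        = ENNReal.ofReal (IF.toReal ^ (1 - t) * IG.toReal ^ t) := by
          rw [ENNReal.ofReal_mul (Real.rpow_nonneg ENNReal.toReal_nonneg _),
            ← ENNReal.ofReal_rpow_of_nonneg ENNReal.toReal_nonneg ht0'.le,
            ← ENNReal.ofReal_rpow_of_nonneg ENNReal.toReal_nonneg ht0.le,
            ENNReal.ofReal_toReal hIFtop, ENNReal.ofReal_toReal hIGtop]
      _ ≤ ENNReal.ofReal ((1 - t) * IF.toReal + t * IG.toReal) :=
          ENNReal.ofReal_le_ofReal hreal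
      _ = ENNReal.ofReal (1 - t) * IF + ENNReal.ofReal t * IG := by
          rw [ENNReal.ofReal_add (by positivity) (by positivity),
            ENNReal.ofReal_mul ht0'.le, ENNReal.ofReal_mul ht0.le,
            ENNReal.ofReal_toReal hIFtop, ENNReal.ofReal_toReal hIGtop]
  -- conclude
  have chain1 : c₀ * ∫⁻ z, H z ≤ ∫⁻ z, h z := by
    rw [← lintegral_const_mul _ hHm]
    refine lintegral_mono fun z => ?_
    calc c₀ * H z ≤ c₀ * (h z * c₀⁻¹) := mul_le_mul_right (min_le_left _ _) _
      _ = h z * (c₀ * c₀⁻¹) := by ring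
      _ = h z := by rw [ENNReal.mul_inv_cancel hc₀0 hc₀top, mul_one]
  have final : c₀ * (IF ^ (1 - t) * IG ^ t) = (∫⁻ x, f x) ^ (1 - t) * (∫⁻ x, g x) ^ t := by
    have hMf' : Mf ^ (1 - t) ≠ 0 :=
      (ENNReal.rpow_pos (lt_of_le_of_ne (zero_le) (Ne.symm hMf0)) hfM).ne'
    have hMf'' : Mf ^ (1 - t) ≠ ⊤ := ENNReal.rpow_ne_top_of_nonneg ht0'.le hfM
    have hMg' : Mg ^ t ≠ 0 :=
      (ENNReal.rpow_pos (lt_of_le_of_ne (zero_le) (Ne.symm hMg0)) hgM).ne'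
    have hMg'' : Mg ^ t ≠ ⊤ := ENNReal.rpow_ne_top_of_nonneg ht0.le hgM
    rw [hIF, hIG,
      ENNReal.mul_rpow_of_ne_top hfi (ENNReal.inv_ne_top.2 hMf0),
      ENNReal.mul_rpow_of_ne_top hgi (ENNReal.inv_ne_top.2 hMg0),
      ENNReal.inv_rpow, ENNReal.inv_rpow, hc₀]
    calc Mf ^ (1 - t) * Mg ^ t
          * ((∫⁻ x, f x) ^ (1 - t) * (Mf ^ (1 - t))⁻¹ * ((∫⁻ x, g x) ^ t * (Mg ^ t)⁻¹))
        = (Mf ^ (1 - t) * (Mf ^ (1 - t))⁻¹) * (Mg ^ t * (Mg ^ t)⁻¹)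
          * ((∫⁻ x, f x) ^ (1 - t) * (∫⁻ x, g x) ^ t) := by ring
      _ = (∫⁻ x, f x) ^ (1 - t) * (∫⁻ x, g x) ^ t := by
          rw [ENNReal.mul_inv_cancel hMf' hMf'', ENNReal.mul_inv_cancel hMg' hMg'',
            one_mul, one_mul]
  calc (∫⁻ x, f x) ^ (1 - t) * (∫⁻ x, g x) ^ t
      = c₀ * (IF ^ (1 - t) * IG ^ t) := final.symm
    _ ≤ c₀ * (ENNReal.ofReal (1 - t) * IF + ENNReal.ofReal t * IG) := mul_le_mul_right amgm _
    _ ≤ c₀ * ∫⁻ z, H z := mul_le_mul_right chain2 _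
    _ ≤ ∫⁻ z, h z := chain1



/-- The linear slicing equivalence between `Fin (d+1) → ℝ` and `ℝ × (Fin d → ℝ)`. -/
noncomputable def sliceLinEquiv (d : ℕ) : (Fin (d+1) → ℝ) ≃ₗ[ℝ] ℝ × (Fin d → ℝ) where
  toFun f := (f 0, fun j => f j.succ)
  invFun p := Fin.cons p.1 p.2
  map_add' f g := rfl
  map_smul' c f := rfl
  left_inv f := by
    funext j
    refine Fin.cases ?_ (fun i => ?_) j
    · exact Fin.cons_zero _ _
    · exact Fin.cons_succ _ _ _
  right_inv p := by
    refine Prod.ext ?_ ?_ <;> first | rfl | (funext j; rfl)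

lemma sliceLinEquiv_coe_eq (d : ℕ) :
    ⇑(MeasurableEquiv.piFinSuccAbove (fun _ : Fin (d+1) => ℝ) 0) = ⇑(sliceLinEquiv d) := by
  funext f
  simp only [MeasurableEquiv.piFinSuccAbove, Fin.insertNthEquiv, sliceLinEquiv]
  rfl

lemma volume_image_sliceLinEquiv {d : ℕ} {S : Set (Fin (d+1) → ℝ)} (hS : MeasurableSet S) :
    volume (⇑(sliceLinEquiv d) '' S) = volume S := by
  have mp := volume_preserving_piFinSuccAbove (fun _ : Fin (d+1) => ℝ) 0
  rw [← sliceLinEquiv_coe_eq d, MeasurableEquiv.image_eq_preimage_symm]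
  exact (MeasurePreserving.symm _ mp).measure_preimage hS.nullMeasurableSet

section BMhelpers

variable {E F' : Type*} [AddCommGroup E] [Module ℝ E] [AddCommGroup F'] [Module ℝ F']

lemma linimg_add (m : E →ₗ[ℝ] F') (X Y : Set E) : ⇑m '' (X + Y) = ⇑m '' X + ⇑m '' Y := by
  ext z
  constructor
  · rintro ⟨w, ⟨x, hx, y, hy, rfl⟩, rfl⟩
    exact ⟨m x, mem_image_of_mem _ hx, m y, mem_image_of_mem _ hy, (map_add m x y).symm⟩
  · rintro ⟨a, ⟨x, hx, rfl⟩, b, ⟨y, hy, rfl⟩, rfl⟩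
    exact ⟨x + y, ⟨x, hx, y, hy, rfl⟩, map_add m x y⟩

lemma linimg_smul (m : E →ₗ[ℝ] F') (c : ℝ) (X : Set E) : ⇑m '' (c • X) = c • (⇑m '' X) := by
  ext z
  constructor
  · rintro ⟨w, ⟨x, hx, rfl⟩, rfl⟩
    exact ⟨m x, mem_image_of_mem _ hx, (map_smul m c x).symm⟩
  · rintro ⟨a, ⟨x, hx, rfl⟩, rfl⟩
    exact ⟨c • x, smul_mem_smul_set hx, map_smul m c x⟩

end BMhelpers

/-- Slices of a compact set are compact. -/
lemma isCompact_slice {α : Type*} [TopologicalSpace α] {C : Set (ℝ × α)} (hC : IsCompact C)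
    (x : ℝ) : IsCompact (Prod.mk x ⁻¹' C) := by
  have h1 : IsCompact (C ∩ ({x} ×ˢ (univ : Set α))) :=
    hC.inter_right ((isClosed_singleton).prod isClosed_univ)
  have h2 : Prod.mk x ⁻¹' C = Prod.snd '' (C ∩ ({x} ×ˢ (univ : Set α))) := by
    ext y
    constructor
    · intro hy; exact ⟨(x, y), ⟨hy, by simp⟩, rfl⟩
    · rintro ⟨⟨x', y'⟩, ⟨hp, hx', -⟩, rfl⟩
      simp only [singleton_prod, mem_image] at hx' ⊢
      obtain rfl : x' = x := by simpa using hx'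
      exact hp
  rw [h2]
  exact h1.image continuous_snd

/-- Slices of a convex set are convex. -/
lemma convex_slice {α : Type*} [AddCommGroup α] [Module ℝ α] {C : Set (ℝ × α)}
    (hC : Convex ℝ C) (x : ℝ) : Convex ℝ (Prod.mk x ⁻¹' C) := by
  intro y1 h1 y2 h2 a b ha hb hab
  have := hC h1 h2 ha hb hab
  have heq : a • ((x : ℝ), y1) + b • (x, y2) = (x, a • y1 + b • y2) := by
    rw [Prod.smul_mk, Prod.smul_mk, Prod.mk_add_mk]
    congr 1
    simp [smul_eq_mul, ← add_mul, hab]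
  rw [heq] at this
  exact this

/-- Multiplicative Brunn–Minkowski inequality in `Fin d → ℝ`, by induction on `d`. -/
theorem bm_mult_pi : ∀ (d : ℕ) (t : ℝ), 0 < t → t < 1 →
    ∀ (A B : Set (Fin d → ℝ)), IsCompact A → Convex ℝ A → A.Nonempty →
      IsCompact B → Convex ℝ B → B.Nonempty →
      volume A ^ (1 - t) * volume B ^ t ≤ volume ((1 - t) • A + t • B) := by
  intro d
  induction d with
  | zero =>
    intro t ht0 ht1 A B hAc hAco hAne hBc hBco hBne
    have huniv : ∀ (S : Set (Fin 0 → ℝ)), S.Nonempty → S = univ := fun S hS =>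
      hS.eq_univ
    have hv : volume (univ : Set (Fin 0 → ℝ)) = 1 := by
      rw [MeasureTheory.volume_pi, Measure.pi_univ]
      simp
    have hCne : ((1 - t) • A + t • B).Nonempty :=
      (hAne.smul_set).add (hBne.smul_set)
    rw [huniv _ hCne, huniv A hAne, huniv B hBne, hv]
    simp [ENNReal.one_rpow]
  | succ d ih =>
    intro t ht0 ht1 A B hAc hAco hAne hBc hBco hBne
    have ht0' : (0:ℝ) < 1 - t := by linarith
    rcases eq_or_ne (volume A) 0 with h0 | hA0
    · rw [h0, ENNReal.zero_rpow_of_pos ht0', zero_mul]; exact zero_le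
    rcases eq_or_ne (volume B) 0 with h0 | hB0
    · rw [h0, ENNReal.zero_rpow_of_pos ht0, mul_zero]; exact zero_le
    set m : (Fin (d+1) → ℝ) →ₗ[ℝ] ℝ × (Fin d → ℝ) := (sliceLinEquiv d).toLinearMap with hm
    have hmc : Continuous ⇑m := LinearMap.continuous_of_finiteDimensional m
    have hmcoe : ⇑m = ⇑(sliceLinEquiv d) := rfl
    set A' := ⇑m '' A with hA'
    set B' := ⇑m '' B with hB'
    set C : Set (Fin (d+1) → ℝ) := (1 - t) • A + t • B with hC
    set C' := ⇑m '' C with hC'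
    have hCc : IsCompact C := ((hAc.smul (1 - t)).add (hBc.smul t))
    have hA'c : IsCompact A' := hAc.image hmc
    have hB'c : IsCompact B' := hBc.image hmc
    have hC'c : IsCompact C' := hCc.image hmc
    have hA'co : Convex ℝ A' := hAco.linear_image m
    have hB'co : Convex ℝ B' := hBco.linear_image m
    have hC'eq : C' = (1 - t) • A' + t • B' := by
      rw [hC', hC, linimg_add, linimg_smul, linimg_smul]
    have hvolA : volume A' = volume A := by
      rw [hA', hmcoe]; exact volume_image_sliceLinEquiv hAc.measurableSet
    have hvolB : volume B' = volume B := by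
      rw [hB', hmcoe]; exact volume_image_sliceLinEquiv hBc.measurableSet
    have hvolC : volume C' = volume C := by
      rw [hC', hmcoe]; exact volume_image_sliceLinEquiv hCc.measurableSet
    -- slice functions
    set f : ℝ → ℝ≥0∞ := fun x => volume (Prod.mk x ⁻¹' A') with hf
    set g : ℝ → ℝ≥0∞ := fun x => volume (Prod.mk x ⁻¹' B') with hg
    set h : ℝ → ℝ≥0∞ := fun x => volume (Prod.mk x ⁻¹' C') with hh
    have hfm : Measurable f := measurable_measure_prodMk_left hA'c.measurableSet
    have hgm : Measurable g := measurable_measure_prodMk_left hB'c.measurableSet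
    have hhm : Measurable h := measurable_measure_prodMk_left hC'c.measurableSet
    have hfub : ∀ (S : Set (ℝ × (Fin d → ℝ))), MeasurableSet S →
        volume S = ∫⁻ x, volume (Prod.mk x ⁻¹' S) := by
      intro S hS
      rw [MeasureTheory.Measure.volume_eq_prod, Measure.prod_apply hS]
    have hintf : ∫⁻ x, f x = volume A' := (hfub A' hA'c.measurableSet).symm
    have hintg : ∫⁻ x, g x = volume B' := (hfub B' hB'c.measurableSet).symm
    have hinth : ∫⁻ x, h x = volume C' := (hfub C' hC'c.measurableSet).symm
    have hfi : ∫⁻ x, f x ≠ ⊤ := by rw [hintf, hvolA]; exact hAc.measure_lt_top.ne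
    have hgi : ∫⁻ x, g x ≠ ⊤ := by rw [hintg, hvolB]; exact hBc.measure_lt_top.ne
    have hslice_bound : ∀ (S : Set (ℝ × (Fin d → ℝ))), IsCompact S →
        (⨆ x, volume (Prod.mk x ⁻¹' S)) ≠ ⊤ := by
      intro S hS
      have hb : ∀ x, volume (Prod.mk x ⁻¹' S) ≤ volume (Prod.snd '' S) := by
        intro x
        apply measure_mono
        intro y hy
        exact ⟨(x, y), hy, rfl⟩
      exact (iSup_le hb).trans_lt (hS.image continuous_snd).measure_lt_top |>.ne
    have hfM : (⨆ x, f x) ≠ ⊤ := hslice_bound A' hA'c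
    have hgM : (⨆ x, g x) ≠ ⊤ := hslice_bound B' hB'c
    -- pointwise slice inequality from induction hypothesis
    have key : ∀ x y, f x ^ (1 - t) * g y ^ t ≤ h ((1 - t) * x + t * y) := by
      intro x y
      rcases eq_empty_or_nonempty (Prod.mk x ⁻¹' A') with he | hAsne
      · rw [hf]; simp only [he, measure_empty]
        rw [ENNReal.zero_rpow_of_pos ht0', zero_mul]; exact zero_le
      rcases eq_empty_or_nonempty (Prod.mk y ⁻¹' B') with he | hBsne
      · rw [hg]; simp only [he, measure_empty]
        rw [ENNReal.zero_rpow_of_pos ht0, mul_zero]; exact zero_le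
      have hAs : IsCompact (Prod.mk x ⁻¹' A') := isCompact_slice hA'c x
      have hBs : IsCompact (Prod.mk y ⁻¹' B') := isCompact_slice hB'c y
      have hAsco : Convex ℝ (Prod.mk x ⁻¹' A') := convex_slice hA'co x
      have hBsco : Convex ℝ (Prod.mk y ⁻¹' B') := convex_slice hB'co y
      have hIH := ih t ht0 ht1 _ _ hAs hAsco hAsne hBs hBsco hBsne
      refine hIH.trans (measure_mono ?_)
      rintro w ⟨a, ⟨ya, hya, rfl⟩, b, ⟨yb, hyb, rfl⟩, rfl⟩
      rw [hC'eq]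
      refine ⟨(1 - t) • (x, ya), smul_mem_smul_set hya, t • (y, yb), smul_mem_smul_set hyb, ?_⟩
      refine Prod.ext ?_ rfl
      simp [smul_eq_mul]
    have hPL := prekopa_leindler_dim1 ht0 ht1 f g h hfm hgm hhm hfi hgi hfM hgM key
    rw [hintf, hintg, hinth, hvolA, hvolB, hvolC] at hPL
    exact hPL

/-- Multiplicative Brunn–Minkowski in Euclidean space. -/
theorem bm_mult_euc (d : ℕ) (t : ℝ) (ht0 : 0 < t) (ht1 : t < 1)
    (A B : Set (EuclideanSpace ℝ (Fin d))) (hAc : IsCompact A) (hAco : Convex ℝ A)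
    (hAne : A.Nonempty) (hBc : IsCompact B) (hBco : Convex ℝ B) (hBne : B.Nonempty) :
    volume A ^ (1 - t) * volume B ^ t ≤ volume ((1 - t) • A + t • B) := by
  set L : EuclideanSpace ℝ (Fin d) ≃L[ℝ] (Fin d → ℝ) :=
    PiLp.continuousLinearEquiv 2 ℝ (fun _ : Fin d => ℝ) with hL
  have hvol : ∀ (S : Set (EuclideanSpace ℝ (Fin d))), MeasurableSet S →
      volume (⇑L '' S) = volume S := by
    intro S hS
    have mp := EuclideanSpace.volume_preserving_symm_measurableEquiv_toLp (Fin d)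
    have hcoe : ⇑((MeasurableEquiv.toLp 2 (Fin d → ℝ)).symm) = ⇑L := rfl
    have himg : ⇑L '' S = ((MeasurableEquiv.toLp 2 (Fin d → ℝ)).symm).symm ⁻¹' S := by
      rw [← hcoe, ← MeasurableEquiv.image_eq_preimage_symm]
    rw [himg]
    exact (MeasurePreserving.symm _ mp).measure_preimage hS.nullMeasurableSet
  set A' := ⇑L '' A with hA'
  set B' := ⇑L '' B with hB'
  have hA'c : IsCompact A' := hAc.image L.continuous
  have hB'c : IsCompact B' := hBc.image L.continuous
  have hA'co : Convex ℝ A' := hAco.linear_image (L : EuclideanSpace ℝ (Fin d) →ₗ[ℝ] (Fin d → ℝ))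
  have hB'co : Convex ℝ B' := hBco.linear_image (L : EuclideanSpace ℝ (Fin d) →ₗ[ℝ] (Fin d → ℝ))
  have hkey := bm_mult_pi d t ht0 ht1 A' B' hA'c hA'co (hAne.image _) hB'c hB'co (hBne.image _)
  have hC : (1 - t) • A' + t • B' = ⇑L '' ((1 - t) • A + t • B) := by
    have hcoe2 : ⇑L = ⇑(L : EuclideanSpace ℝ (Fin d) →ₗ[ℝ] (Fin d → ℝ)) := rfl
    rw [hA', hB', hcoe2, ← linimg_smul (L : EuclideanSpace ℝ (Fin d) →ₗ[ℝ] (Fin d → ℝ)),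
      ← linimg_smul (L : EuclideanSpace ℝ (Fin d) →ₗ[ℝ] (Fin d → ℝ)),
      ← linimg_add (L : EuclideanSpace ℝ (Fin d) →ₗ[ℝ] (Fin d → ℝ))]
  rw [hvol A hAc.measurableSet, hvol B hBc.measurableSet] at hkey
  rw [hC, hvol _ (((hAc.smul (1 - t)).add (hBc.smul t)).measurableSet)] at hkey
  exact hkey

lemma smul_set_add_distrib {V : Type*} [AddCommGroup V] [Module ℝ V] (c : ℝ) (X Y : Set V) :
    c • (X + Y) = c • X + c • Y := by
  ext z
  constructor
  · rintro ⟨w, ⟨x, hx, y, hy, rfl⟩, rfl⟩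
    exact ⟨c • x, smul_mem_smul_set hx, c • y, smul_mem_smul_set hy, (smul_add c x y).symm⟩
  · rintro ⟨a, ⟨x, hx, rfl⟩, b, ⟨y, hy, rfl⟩, rfl⟩
    exact ⟨x + y, ⟨x, hx, y, hy, rfl⟩, smul_add c x y⟩

lemma smul_smul_set {V : Type*} [AddCommGroup V] [Module ℝ V] (c c' : ℝ) (X : Set V) :
    c • (c' • X) = (c * c') • X := by
  ext z
  constructor
  · rintro ⟨w, ⟨x, hx, rfl⟩, rfl⟩
    exact ⟨x, hx, mul_smul c c' x⟩
  · rintro ⟨x, hx, rfl⟩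
    exact ⟨c' • x, smul_mem_smul_set hx, (mul_smul c c' x).symm⟩

/-- Additive Brunn–Minkowski in Euclidean space (real rpow form). -/
theorem bm_add_euc (d : ℕ) (hd : 1 ≤ d)
    (A B : Set (EuclideanSpace ℝ (Fin d))) (hAc : IsCompact A) (hAco : Convex ℝ A)
    (hAne : A.Nonempty) (hBc : IsCompact B) (hBco : Convex ℝ B) (hBne : B.Nonempty) :
    (volume A).toReal ^ (1 / (d:ℝ)) + (volume B).toReal ^ (1 / (d:ℝ))
      ≤ (volume (A + B)).toReal ^ (1 / (d:ℝ)) := by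
  have hd0 : (0:ℝ) < d := by exact_mod_cast hd
  set a := (volume A).toReal with ha
  set b := (volume B).toReal with hb
  have ha0 : 0 ≤ a := ENNReal.toReal_nonneg
  have hb0 : 0 ≤ b := ENNReal.toReal_nonneg
  have hABc : IsCompact (A + B) := hAc.add hBc
  have hABfin : volume (A + B) ≠ ⊤ := hABc.measure_lt_top.ne
  have hAfin : volume A ≠ ⊤ := hAc.measure_lt_top.ne
  have hBfin : volume B ≠ ⊤ := hBc.measure_lt_top.ne
  have htransA : volume A ≤ volume (A + B) := by
    obtain ⟨y0, hy0⟩ := hBne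
    have hsub : (· + y0) '' A ⊆ A + B := by rintro z ⟨x, hx, rfl⟩; exact add_mem_add hx hy0
    have hv : volume ((· + y0) '' A) = volume A := by
      have him : (· + y0) '' A = (· + -y0) ⁻¹' A := by
        ext x; simp [neg_add_eq_sub, sub_eq_iff_eq_add]
      rw [him]
      exact measure_preimage_add_right volume (-y0) A
    calc volume A = volume ((· + y0) '' A) := hv.symm
      _ ≤ volume (A + B) := measure_mono hsub
  have htransB : volume B ≤ volume (A + B) := by
    obtain ⟨x0, hx0⟩ := hAne
    have hsub : (x0 + ·) '' B ⊆ A + B := by rintro z ⟨y, hy, rfl⟩; exact add_mem_add hx0 hy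
    have hv : volume ((x0 + ·) '' B) = volume B := by
      have him : (x0 + ·) '' B = (-x0 + ·) ⁻¹' B := by
        ext x; simp [neg_add_eq_iff_eq_add, eq_comm]
      rw [him]
      exact measure_preimage_add volume (-x0) B
    calc volume B = volume ((x0 + ·) '' B) := hv.symm
      _ ≤ volume (A + B) := measure_mono hsub
  have hABa : a ≤ (volume (A + B)).toReal := ENNReal.toReal_mono hABfin htransA
  have hABb : b ≤ (volume (A + B)).toReal := ENNReal.toReal_mono hABfin htransB
  rcases eq_or_lt_of_le ha0 with hA0 | hA0
  · rw [← hA0, Real.zero_rpow (by positivity), zero_add]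
    exact Real.rpow_le_rpow hb0 hABb (by positivity)
  rcases eq_or_lt_of_le hb0 with hB0 | hB0
  · rw [← hB0, Real.zero_rpow (by positivity), add_zero]
    exact Real.rpow_le_rpow ha0 hABa (by positivity)
  -- main case : both volumes positive
  set α := a ^ (1 / (d:ℝ)) with hα
  set β := b ^ (1 / (d:ℝ)) with hβ
  have hα0 : 0 < α := Real.rpow_pos_of_pos hA0 _
  have hβ0 : 0 < β := Real.rpow_pos_of_pos hB0 _
  set s := α + β with hs
  have hs0 : 0 < s := by positivity
  set t := β / s with ht
  have ht0 : 0 < t := by positivity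
  have ht1 : t < 1 := by
    rw [ht, div_lt_one hs0, hs]
    linarith
  have h1t : 1 - t = α / s := by
    rw [ht, hs]; field_simp; ring
  have hαd : α ^ (d:ℕ) = a := by
    rw [hα, ← Real.rpow_natCast (a ^ (1 / (d:ℝ))) d, ← Real.rpow_mul ha0]
    rw [one_div, inv_mul_cancel₀ (ne_of_gt hd0), Real.rpow_one]
  have hβd : β ^ (d:ℕ) = b := by
    rw [hβ, ← Real.rpow_natCast (b ^ (1 / (d:ℝ))) d, ← Real.rpow_mul hb0]
    rw [one_div, inv_mul_cancel₀ (ne_of_gt hd0), Real.rpow_one]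
  set A'' := α⁻¹ • A with hA''
  set B'' := β⁻¹ • B with hB''
  have hvolA'' : volume A'' = 1 := by
    rw [hA'', Measure.addHaar_smul, finrank_euclideanSpace_fin,
      abs_of_pos (by positivity : (0:ℝ) < α⁻¹ ^ d), inv_pow, hαd,
      show volume A = ENNReal.ofReal a from (ENNReal.ofReal_toReal hAfin).symm,
      ← ENNReal.ofReal_mul (by positivity), inv_mul_cancel₀ (ne_of_gt hA0),
      ENNReal.ofReal_one]
  have hvolB'' : volume B'' = 1 := by
    rw [hB'', Measure.addHaar_smul, finrank_euclideanSpace_fin,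
      abs_of_pos (by positivity : (0:ℝ) < β⁻¹ ^ d), inv_pow, hβd,
      show volume B = ENNReal.ofReal b from (ENNReal.ofReal_toReal hBfin).symm,
      ← ENNReal.ofReal_mul (by positivity), inv_mul_cancel₀ (ne_of_gt hB0),
      ENNReal.ofReal_one]
  have hmult := bm_mult_euc d t ht0 ht1 A'' B''
    (hAc.smul _) (hAco.smul _) (hAne.smul_set)
    (hBc.smul _) (hBco.smul _) (hBne.smul_set)
  rw [hvolA'', hvolB'', ENNReal.one_rpow, ENNReal.one_rpow, one_mul] at hmult
  have hcomb : (1 - t) • A'' + t • B'' = s⁻¹ • (A + B) := by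
    rw [hA'', hB'', smul_smul_set, smul_smul_set, h1t, ht,
      smul_set_add_distrib]
    congr 2
    · rw [div_mul_eq_mul_div, div_eq_iff (ne_of_gt hs0)]
      field_simp
    · rw [div_mul_eq_mul_div, div_eq_iff (ne_of_gt hs0)]
      field_simp
  rw [hcomb, Measure.addHaar_smul, finrank_euclideanSpace_fin] at hmult
  -- extract the real inequality
  have hsd : s ^ (d:ℕ) ≤ (volume (A + B)).toReal := by
    have h2 : (1:ℝ) ≤ (s⁻¹ ^ d) * (volume (A + B)).toReal := by
      have h3 := ENNReal.toReal_mono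
        (ENNReal.mul_ne_top ENNReal.ofReal_ne_top hABfin) hmult
      rw [ENNReal.toReal_mul, ENNReal.toReal_ofReal (abs_nonneg _), ENNReal.toReal_one,
        abs_of_pos (by positivity : (0:ℝ) < s⁻¹ ^ d)] at h3
      exact h3
    have h4 : (0:ℝ) < s ^ (d:ℕ) := by positivity
    calc s ^ (d:ℕ) = s ^ (d:ℕ) * 1 := (mul_one _).symm
      _ ≤ s ^ (d:ℕ) * ((s⁻¹ ^ d) * (volume (A + B)).toReal) := by
          exact mul_le_mul_of_nonneg_left h2 (le_of_lt h4)
      _ = (volume (A + B)).toReal := by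
          rw [← mul_assoc, ← mul_pow, mul_inv_cancel₀ (ne_of_gt hs0), one_pow, one_mul]
  calc α + β = ((α + β) ^ (d:ℕ)) ^ (1 / (d:ℝ)) := by
        rw [← Real.rpow_natCast (α + β) d, ← Real.rpow_mul (by positivity)]
        rw [mul_one_div, div_self (ne_of_gt hd0), Real.rpow_one]
    _ ≤ (volume (A + B)).toReal ^ (1 / (d:ℝ)) := by
        apply Real.rpow_le_rpow (by positivity) _ (by positivity)
        rw [← hs]; exact hsd



lemma nodalSubdiff_closed {d : ℕ} (N : Finset (Euc d)) (u : Euc d → ℝ) (z : Euc d) :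
    IsClosed (nodalSubdiff N u z) := by
  have : nodalSubdiff N u z = ⋂ y ∈ N, {p : Euc d | u z + ⟪p, y - z⟫ ≤ u y} := by
    ext p; simp [nodalSubdiff, mem_iInter]
  rw [this]
  refine isClosed_biInter fun y _ => ?_
  exact isClosed_le (continuous_const.add (continuous_id.inner continuous_const)) continuous_const

lemma nodalSubdiff_convex {d : ℕ} (N : Finset (Euc d)) (u : Euc d → ℝ) (z : Euc d) :
    Convex ℝ (nodalSubdiff N u z) := by
  intro p hp q hq a b ha hb hab
  intro y hy
  have h1 := hp y hy
  have h2 := hq y hy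
  have hexp : ⟪a • p + b • q, y - z⟫ = a * ⟪p, y - z⟫ + b * ⟪q, y - z⟫ := by
    rw [inner_add_left, real_inner_smul_left, real_inner_smul_left]
  have h3 := add_le_add (mul_le_mul_of_nonneg_left h1 ha) (mul_le_mul_of_nonneg_left h2 hb)
  have h4 : a * u z + b * u z = u z := by rw [← add_mul, hab, one_mul]
  have h5 : a * u y + b * u y = u y := by rw [← add_mul, hab, one_mul]
  rw [hexp]
  nlinarith [h3]

/-- Subdifferentials at nodes interior to the convex hull are bounded. -/
lemma nodalSubdiff_bounded {d : ℕ} (N : Finset (Euc d)) (u : Euc d → ℝ) (z : Euc d)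
    (hzN : z ∈ N) (hz : z ∈ interior (convexHull ℝ (N : Set (Euc d)))) :
    ∃ R : ℝ, nodalSubdiff N u z ⊆ Metric.closedBall 0 R := by
  obtain ⟨δ, hδ0, hδ⟩ := Metric.mem_nhds_iff.mp (mem_interior_iff_mem_nhds.mp hz)
  have hNne : N.Nonempty := ⟨z, hzN⟩
  set M : ℝ := N.sup' hNne (fun y => u y - u z) with hM
  have hM0 : 0 ≤ M := by
    have h := Finset.le_sup' (fun y => u y - u z) hzN
    rw [hM]
    simp only [sub_self] at h; exact h
  refine ⟨2 * M / δ, fun p hp => ?_⟩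
  rcases eq_or_ne p 0 with rfl | hp0
  · simp [Metric.mem_closedBall]
    positivity
  -- the linear functional is bounded by M on the hull
  have hhull : ∀ x ∈ convexHull ℝ (N : Set (Euc d)), ⟪p, x - z⟫ ≤ M := by
    intro x hx
    have hconv : Convex ℝ {x : Euc d | ⟪p, x - z⟫ ≤ M} := by
      intro x1 h1 x2 h2 a b ha hb hab
      simp only [mem_setOf_eq] at h1 h2 ⊢
      have hz1 : z = a • z + b • z := by rw [← add_smul, hab, one_smul]
      have : (a • x1 + b • x2) - z = a • (x1 - z) + b • (x2 - z) := by
        rw [smul_sub, smul_sub]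
        nth_rewrite 1 [hz1]
        abel
      rw [this, inner_add_right, real_inner_smul_right, real_inner_smul_right]
      nlinarith [mul_le_mul_of_nonneg_left h1 ha, mul_le_mul_of_nonneg_left h2 hb, hab]
    have hsubN : (N : Set (Euc d)) ⊆ {x : Euc d | ⟪p, x - z⟫ ≤ M} := by
      intro y hy
      have h1 := hp y hy
      have h2 := Finset.le_sup' (fun y => u y - u z) hy
      simp only [mem_setOf_eq]
      simp only [Finset.mem_coe] at hy
      linarith [hp y hy, Finset.le_sup' (fun y => u y - u z) hy]
    exact convexHull_min hsubN hconv hx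
  -- test with x := z + (δ/2)•(‖p‖⁻¹ • p)
  set x : Euc d := z + (δ / 2) • (‖p‖⁻¹ • p) with hx
  have hxball : x ∈ Metric.ball z δ := by
    rw [Metric.mem_ball, dist_eq_norm, hx]
    rw [show z + (δ / 2) • (‖p‖⁻¹ • p) - z = (δ / 2) • (‖p‖⁻¹ • p) by abel]
    rw [norm_smul, norm_smul, norm_inv, norm_norm]
    rw [inv_mul_cancel₀ (norm_ne_zero_iff.2 hp0), mul_one, Real.norm_eq_abs,
      abs_of_pos (by positivity : (0:ℝ) < δ / 2)]
    linarith
  have hinner : ⟪p, x - z⟫ = (δ / 2) * ‖p‖ := by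
    rw [hx, show z + (δ / 2) • (‖p‖⁻¹ • p) - z = (δ / 2) • (‖p‖⁻¹ • p) by abel]
    rw [real_inner_smul_right, real_inner_smul_right, real_inner_self_eq_norm_sq]
    field_simp [norm_ne_zero_iff.2 hp0]
  have hbound := hhull x (hδ hxball)
  rw [hinner] at hbound
  rw [Metric.mem_closedBall, dist_zero_right, le_div_iff₀ hδ0]
  nlinarith [hbound]

/-- A hyperplane has measure zero. -/
lemma hyperplane_volume_zero {d : ℕ} (v : Euc d) (hv : v ≠ 0) (c : ℝ) :
    volume {p : Euc d | ⟪p, v⟫ = c} = 0 := by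
  set K := LinearMap.ker ((innerSL ℝ v : Euc d →L[ℝ] ℝ) : Euc d →ₗ[ℝ] ℝ) with hK
  have hKne : K ≠ ⊤ := by
    intro htop
    have hvK : v ∈ K := htop ▸ Submodule.mem_top
    rw [hK, LinearMap.mem_ker] at hvK
    have : ⟪v, v⟫ = (0:ℝ) := hvK
    exact hv (inner_self_eq_zero.mp this)
  set p₀ : Euc d := (c / ‖v‖ ^ 2) • v with hp₀
  have hset : {p : Euc d | ⟪p, v⟫ = c} = (· + p₀) '' (K : Set (Euc d)) := by
    ext x
    simp only [mem_setOf_eq, mem_image, SetLike.mem_coe]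
    constructor
    · intro hx
      refine ⟨x - p₀, ?_, by abel⟩
      rw [LinearMap.mem_ker]
      show ⟪v, x - p₀⟫ = (0:ℝ)
      have hvx : ⟪v, x⟫ = c := by rw [real_inner_comm]; exact hx
      have hvp : ⟪v, p₀⟫ = c := by
        rw [hp₀, real_inner_smul_right, real_inner_self_eq_norm_sq]
        field_simp [norm_ne_zero_iff.2 hv]
      rw [inner_sub_right, hvx, hvp, sub_self]
    · rintro ⟨k, hk, rfl⟩
      rw [LinearMap.mem_ker] at hk
      have hk' : ⟪k, v⟫ = (0:ℝ) := by rw [real_inner_comm]; exact hk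
      rw [inner_add_left, hk', zero_add, hp₀,
        real_inner_smul_left, real_inner_self_eq_norm_sq]
      field_simp [norm_ne_zero_iff.2 hv]
  rw [hset, show (· + p₀) '' (K : Set (Euc d)) = (· + -p₀) ⁻¹' (K : Set (Euc d)) by
    ext x; simp [neg_add_eq_sub, sub_eq_iff_eq_add],
    measure_preimage_add_right volume (-p₀) _]
  exact Measure.addHaar_submodule volume K hKne

/-- Subdifferentials at distinct nodes intersect in measure zero. -/
lemma nodalSubdiff_aedisjoint {d : ℕ} (N : Finset (Euc d)) (u : Euc d → ℝ) {z z' : Euc d}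
    (hz : z ∈ N) (hz' : z' ∈ N) (hne : z ≠ z') :
    volume (nodalSubdiff N u z ∩ nodalSubdiff N u z') = 0 := by
  have hsub : nodalSubdiff N u z ∩ nodalSubdiff N u z'
      ⊆ {p : Euc d | ⟪p, z' - z⟫ = u z' - u z} := by
    rintro p ⟨h1, h2⟩
    have ha := h1 z' hz'
    have hb := h2 z hz
    have hab : ⟪p, z - z'⟫ = -⟪p, z' - z⟫ := by
      rw [show z - z' = -(z' - z) by abel, inner_neg_right]
    rw [hab] at hb
    simp only [mem_setOf_eq]
    linarith
  exact measure_mono_null hsub (hyperplane_volume_zero (z' - z) (sub_ne_zero.2 hne.symm) _)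


/-- Measure of the non-contact set: first estimate, `μ(S_ε) ≤ ν_τ(𝒞_ε) − μ(𝒞_ε)`. -/
theorem measure_noncontact_first_estimate
    (d : ℕ) (hd : 1 ≤ d)
    (Ω : Set (Euc d)) (hΩo : IsOpen Ω) (hΩb : Bornology.IsBounded Ω) (hΩc : Convex ℝ Ω)
    (NI NB : Finset (Euc d)) (hdisj : Disjoint NI NB)
    (hNI : (NI : Set (Euc d)) ⊆ Ω) (hNB : (NB : Set (Euc d)) ⊆ frontier Ω)
    (hint : ∀ z ∈ NI, z ∈ interior (convexHull ℝ ((NI ∪ NB : Finset (Euc d)) : Set (Euc d))))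
    (uh vh : Euc d → ℝ)
    (hu : IsConvexNodal NI (NI ∪ NB) uh) (hv : IsConvexNodal NI (NI ∪ NB) vh)
    (heqB : ∀ z ∈ NB, uh z = vh z) (hle : ∀ z ∈ NI, uh z ≤ vh z)
    (ε : ℝ) (hε0 : 0 < ε) (hε1 : ε < 1) :
    -- `f_i`, `g_i`, the contact set `𝒞_ε` and the non-contact set `S_ε`
    let f : Euc d → ℝ := fun z => (volume (nodalSubdiff (NI ∪ NB) uh z)).toReal
    let g : Euc d → ℝ := fun z => (volume (nodalSubdiff (NI ∪ NB) vh z)).toReal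
    let τ : ℝ := ε / (1 - ε)
    let Cε : Finset (Euc d) := NI.filter fun z =>
      convEnv (NI ∪ NB) (fun y => uh y - (1 - ε) * vh y) z = uh z - (1 - ε) * vh z
    ∑ z ∈ NI \ Cε, f z ≤
      (∑ z ∈ Cε, (f z ^ (1 / (d : ℝ))
        + τ⁻¹ * |g z ^ (1 / (d : ℝ)) - f z ^ (1 / (d : ℝ))|) ^ (d : ℕ))
      - ∑ z ∈ Cε, f z := by
  classical
  intro f g τ Cε
  set N : Finset (Euc d) := NI ∪ NB with hN
  set w : Euc d → ℝ := fun y => uh y - (1 - ε) * vh y with hw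
  have hε1' : (0:ℝ) < 1 - ε := by linarith
  have hτ : τ⁻¹ = (1 - ε) / ε := by
    show (ε / (1 - ε))⁻¹ = (1 - ε) / ε
    rw [inv_div]
  have hτ0 : 0 ≤ τ⁻¹ := by rw [hτ]; positivity
  have hd0 : (0:ℝ) < d := by exact_mod_cast hd
  set F : Euc d → Set (Euc d) := fun z => nodalSubdiff N uh z with hF
  set G : Euc d → Set (Euc d) := fun z => nodalSubdiff N vh z with hG
  set W : Euc d → Set (Euc d) := fun z => nodalSubdiff N w z with hWdef
  have hfz : ∀ z, f z = (volume (F z)).toReal := fun z => rfl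
  have hgz : ∀ z, g z = (volume (G z)).toReal := fun z => rfl
  have hCsub : Cε ⊆ NI := Finset.filter_subset _ _
  have hmemN : ∀ z ∈ NI, z ∈ N := fun z hz => Finset.mem_union_left _ hz
  have hcomp : ∀ (u : Euc d → ℝ), ∀ z ∈ NI, IsCompact (nodalSubdiff N u z) := by
    intro u z hz
    obtain ⟨R, hR⟩ := nodalSubdiff_bounded N u z (hmemN z hz) (hint z hz)
    exact (isCompact_closedBall 0 R).of_isClosed_subset (nodalSubdiff_closed N u z) hR
  -- ** Covering lemma **
  have hcover : (⋃ z ∈ NI, F z) ⊆ ⋃ y ∈ Cε, ε⁻¹ • W y := by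
    intro p hp
    simp only [mem_iUnion, exists_prop] at hp
    obtain ⟨z, hz, hpz⟩ := hp
    obtain ⟨ys, hysNI, hysmin⟩ := NI.exists_min_image (fun y => w y - ε * ⟪p, y⟫) ⟨z, hz⟩
    have hwB : ∀ y ∈ NB, w y = ε * uh y := by
      intro y hy
      show uh y - (1 - ε) * vh y = ε * uh y
      rw [← heqB y hy]; ring
    have hwz : w z ≤ ε * uh z := by
      show uh z - (1 - ε) * vh z ≤ ε * uh z
      nlinarith [hle z hz, hε1']
    have hkey : ∀ y ∈ N, w ys + ⟪ε • p, y - ys⟫ ≤ w y := by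
      intro y hy
      rw [real_inner_smul_left, inner_sub_right]
      rcases Finset.mem_union.mp hy with hyI | hyB
      · have hmin := hysmin y hyI
        have hexp : w ys + ε * (⟪p, y⟫ - ⟪p, ys⟫)
            = (w ys - ε * ⟪p, ys⟫) + ε * ⟪p, y⟫ := by ring
        rw [hexp]
        linarith [hmin]
      · have h1 : uh z + ⟪p, y - z⟫ ≤ uh y := hpz y (Finset.mem_union_right _ hyB)
        have h2 := hysmin z hz
        have h3 : w y = ε * uh y := hwB y hyB
        rw [inner_sub_right] at h1
        have h4 : ε * uh z + (ε * ⟪p, y⟫ - ε * ⟪p, z⟫) ≤ ε * uh y := by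
          nlinarith [h1, hε0.le]
        have hexp : w ys + ε * (⟪p, y⟫ - ⟪p, ys⟫)
            = (w ys - ε * ⟪p, ys⟫) + ε * ⟪p, y⟫ := by ring
        rw [hexp]
        linarith [h2, hwz, h4, h3]
    have hyW : ε • p ∈ W ys := hkey
    have hysC : ys ∈ Cε := by
      have henv : convEnv N w ys = w ys := by
        set SS := {t : ℝ | ∃ (q : Euc d) (c : ℝ),
          (∀ y ∈ N, ⟪q, y⟫ + c ≤ w y) ∧ t = ⟪q, ys⟫ + c} with hSS
        have hmem : w ys ∈ SS := by
          refine ⟨ε • p, w ys - ⟪ε • p, ys⟫, fun y hy => ?_, by ring⟩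
          have h := hkey y hy
          rw [inner_sub_right] at h
          linarith
        have hub : ∀ t ∈ SS, t ≤ w ys := by
          rintro t ⟨q, c, hqc, rfl⟩
          exact hqc ys (hmemN ys hysNI)
        exact le_antisymm (csSup_le ⟨_, hmem⟩ hub) (le_csSup ⟨w ys, hub⟩ hmem)
      exact Finset.mem_filter.mpr ⟨hysNI, henv⟩
    simp only [mem_iUnion, exists_prop]
    refine ⟨ys, hysC, Set.mem_smul_set.mpr ⟨ε • p, hyW, ?_⟩⟩
    rw [smul_smul, inv_mul_cancel₀ (ne_of_gt hε0), one_smul]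
  -- ** Per-node estimate via Brunn-Minkowski **
  have hrpow_pow : ∀ x : ℝ, 0 ≤ x → (x ^ (1/(d:ℝ))) ^ (d:ℕ) = x := by
    intro x hx
    rw [← Real.rpow_natCast (x ^ (1/(d:ℝ))) d, ← Real.rpow_mul hx, one_div,
      inv_mul_cancel₀ (ne_of_gt hd0), Real.rpow_one]
  have hnode : ∀ y ∈ Cε, (ε⁻¹) ^ (d:ℕ) * (volume (W y)).toReal
      ≤ (f y ^ (1 / (d : ℝ)) + τ⁻¹ * |g y ^ (1 / (d : ℝ)) - f y ^ (1 / (d : ℝ))|) ^ (d : ℕ) := by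
    intro y hyC
    have hyNI := hCsub hyC
    have hf0 : 0 ≤ f y := by rw [hfz y]; exact ENNReal.toReal_nonneg
    have hbase0 : 0 ≤ f y ^ (1 / (d : ℝ)) + τ⁻¹ * |g y ^ (1 / (d : ℝ)) - f y ^ (1 / (d : ℝ))| :=
      add_nonneg (Real.rpow_nonneg hf0 _)
        (mul_nonneg hτ0 (abs_nonneg (g y ^ (1 / (d : ℝ)) - f y ^ (1 / (d : ℝ)))))
    rcases eq_empty_or_nonempty (W y) with hWe | hWne
    · rw [hWe]
      simp only [measure_empty, ENNReal.toReal_zero, mul_zero]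
      exact pow_nonneg hbase0 _
    have hGne : (G y).Nonempty := hv y hyNI
    have hWc : IsCompact (W y) := hcomp w y hyNI
    have hGc : IsCompact (G y) := hcomp vh y hyNI
    have hFc : IsCompact (F y) := hcomp uh y hyNI
    have hFfin : volume (F y) ≠ ⊤ := hFc.measure_lt_top.ne
    have hsub : W y + (1 - ε) • G y ⊆ F y := by
      rintro q ⟨r, hr, q', ⟨g', hg', rfl⟩, rfl⟩
      intro y' hy'
      have h1 := hr y' hy'
      have h2 := hg' y' hy'
      have h3 : (1 - ε) * (vh y + ⟪g', y' - y⟫) ≤ (1 - ε) * vh y' :=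
        mul_le_mul_of_nonneg_left h2 hε1'.le
      have hw1 : w y = uh y - (1 - ε) * vh y := rfl
      have hw2 : w y' = uh y' - (1 - ε) * vh y' := rfl
      rw [inner_add_left, real_inner_smul_left]
      rw [hw1, hw2] at h1
      nlinarith [h1, h3]
    have hbm := bm_add_euc d hd (W y) ((1 - ε) • G y) hWc
      (nodalSubdiff_convex N w y) hWne (hGc.smul _)
      ((nodalSubdiff_convex N vh y).smul _) (hGne.smul_set)
    have h5 : (volume (W y + (1 - ε) • G y)).toReal ≤ f y :=
      (hfz y) ▸ ENNReal.toReal_mono hFfin (measure_mono hsub)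
    have hsmulG : (volume ((1 - ε) • G y)).toReal = (1 - ε) ^ (d:ℕ) * g y := by
      rw [Measure.addHaar_smul, finrank_euclideanSpace_fin, ENNReal.toReal_mul,
        ENNReal.toReal_ofReal (abs_nonneg _), abs_of_pos (pow_pos hε1' d), hgz]
    have hgd : ((1 - ε) ^ (d:ℕ) * g y) ^ (1/(d:ℝ)) = (1 - ε) * g y ^ (1/(d:ℝ)) := by
      rw [Real.mul_rpow (by positivity) ENNReal.toReal_nonneg,
        ← Real.rpow_natCast (1 - ε) d, ← Real.rpow_mul hε1'.le,
        mul_one_div, div_self (ne_of_gt hd0), Real.rpow_one]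
    have hstar : (volume (W y)).toReal ^ (1/(d:ℝ))
        ≤ f y ^ (1/(d:ℝ)) - (1 - ε) * g y ^ (1/(d:ℝ)) := by
      have hr := Real.rpow_le_rpow ENNReal.toReal_nonneg h5
        (by positivity : (0:ℝ) ≤ 1/(d:ℝ))
      have := hbm.trans hr
      rw [hsmulG, hgd] at this
      linarith
    have hWnn : (0:ℝ) ≤ (volume (W y)).toReal ^ (1/(d:ℝ)) :=
      Real.rpow_nonneg ENNReal.toReal_nonneg _
    calc (ε⁻¹) ^ (d:ℕ) * (volume (W y)).toReal
        = (ε⁻¹) ^ (d:ℕ) * ((volume (W y)).toReal ^ (1/(d:ℝ))) ^ (d:ℕ) := by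
          rw [hrpow_pow _ ENNReal.toReal_nonneg]
      _ = (ε⁻¹ * (volume (W y)).toReal ^ (1/(d:ℝ))) ^ (d:ℕ) := (mul_pow _ _ _).symm
      _ ≤ (f y ^ (1 / (d : ℝ)) + τ⁻¹ * |g y ^ (1 / (d : ℝ)) - f y ^ (1 / (d : ℝ))|) ^ (d : ℕ) := by
          apply pow_le_pow_left₀ (by positivity)
          have h6 : ε⁻¹ * (volume (W y)).toReal ^ (1/(d:ℝ))
              ≤ ε⁻¹ * (f y ^ (1/(d:ℝ)) - (1 - ε) * g y ^ (1/(d:ℝ))) :=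
            mul_le_mul_of_nonneg_left hstar (by positivity)
          have h7 : (1 - ε)/ε * (f y ^ (1/(d:ℝ)) - g y ^ (1/(d:ℝ)))
              ≤ (1 - ε)/ε * |g y ^ (1 / (d : ℝ)) - f y ^ (1 / (d : ℝ))| := by
            apply mul_le_mul_of_nonneg_left _ (by positivity)
            rw [abs_sub_comm]
            exact le_abs_self _
          have hid : ε⁻¹ * (f y ^ (1/(d:ℝ)) - (1 - ε) * g y ^ (1/(d:ℝ)))
              = f y ^ (1/(d:ℝ)) + (1 - ε)/ε * (f y ^ (1/(d:ℝ)) - g y ^ (1/(d:ℝ))) := by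
            field_simp
            ring
          rw [hτ]
          linarith [h6, h7, hid]
  -- ** Global chain **
  have hpair : (↑NI : Set (Euc d)).Pairwise fun z z' => AEDisjoint volume (F z) (F z') := by
    intro z hz z' hz' hne
    exact nodalSubdiff_aedisjoint N uh (hmemN z (Finset.mem_coe.mp hz))
      (hmemN z' (Finset.mem_coe.mp hz')) hne
  have hmeasF : ∀ z ∈ NI, NullMeasurableSet (F z) volume := fun z hz =>
    (hcomp uh z hz).measurableSet.nullMeasurableSet
  have hsum_eq : volume (⋃ z ∈ NI, F z) = ∑ z ∈ NI, volume (F z) :=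
    measure_biUnion_finset₀ hpair hmeasF
  have hfin : ∀ z ∈ NI, volume (F z) ≠ ⊤ := fun z hz => (hcomp uh z hz).measure_lt_top.ne
  have hWfin : ∀ y ∈ Cε, volume (ε⁻¹ • W y) ≠ ⊤ := fun y hy =>
    (((hcomp w y (hCsub hy)).smul ε⁻¹).measure_lt_top).ne
  have main_chain : ∑ z ∈ NI, volume (F z) ≤ ∑ y ∈ Cε, volume (ε⁻¹ • W y) := by
    rw [← hsum_eq]
    exact (measure_mono hcover).trans (measure_biUnion_finset_le _ _)
  have hsmulW : ∀ y ∈ Cε, (volume (ε⁻¹ • W y)).toReal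
      = (ε⁻¹) ^ (d:ℕ) * (volume (W y)).toReal := by
    intro y hy
    rw [Measure.addHaar_smul, finrank_euclideanSpace_fin, ENNReal.toReal_mul,
      ENNReal.toReal_ofReal (abs_nonneg _), abs_of_pos (pow_pos (inv_pos.2 hε0) d)]
  have hreal : ∑ z ∈ NI, f z
      ≤ ∑ y ∈ Cε, (f y ^ (1 / (d : ℝ))
        + τ⁻¹ * |g y ^ (1 / (d : ℝ)) - f y ^ (1 / (d : ℝ))|) ^ (d : ℕ) := by
    have h1 : ∑ z ∈ NI, f z = (∑ z ∈ NI, volume (F z)).toReal := by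
      rw [ENNReal.toReal_sum hfin]
    have h2 : (∑ z ∈ NI, volume (F z)).toReal ≤ (∑ y ∈ Cε, volume (ε⁻¹ • W y)).toReal :=
      ENNReal.toReal_mono (by
        rw [← lt_top_iff_ne_top]
        exact ENNReal.sum_lt_top.mpr fun y hy => lt_top_iff_ne_top.mpr (hWfin y hy)) main_chain
    have h3 : (∑ y ∈ Cε, volume (ε⁻¹ • W y)).toReal
        = ∑ y ∈ Cε, (volume (ε⁻¹ • W y)).toReal := ENNReal.toReal_sum hWfin
    calc ∑ z ∈ NI, f z = (∑ z ∈ NI, volume (F z)).toReal := h1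
      _ ≤ (∑ y ∈ Cε, volume (ε⁻¹ • W y)).toReal := h2
      _ = ∑ y ∈ Cε, (volume (ε⁻¹ • W y)).toReal := h3
      _ = ∑ y ∈ Cε, (ε⁻¹) ^ (d:ℕ) * (volume (W y)).toReal := Finset.sum_congr rfl hsmulW
      _ ≤ _ := Finset.sum_le_sum hnode
  have hsplit : ∑ z ∈ NI, f z = ∑ z ∈ NI \ Cε, f z + ∑ z ∈ Cε, f z :=
    (Finset.sum_sdiff hCsub).symm
  linarith [hreal, hsplit]
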